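/- Conditional exponential decay along the gradient flow: let φ_1, …, φ_K ∈ C¹(ℝ), fix c ∈ ℝ^N and ω ∈ ℝ^K, and let Θ(t) = ({v_i(t)}, α(t)) solve the gradient flow of the square loss for the two-layer KNN on [0, T], training only {v_i} and α. For each t, let A(t) be the K×m matrix with entries A_{kj}(t) = Σ_{i=1}^N c_i φ_k(ω_k v_i(t)ᵀ x̃_j). If there is μ > 0 such that σ_min(A(t)) ≥ μ for all t ∈ [0, T] (K ≥ m, σ_min the m-th largest singular value), then L(t) ≤ L(0) e^{−2μ² t} for all t ∈ [0, T]. -/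

import Mathlib

open scoped BigOperators

noncomputable section

/-- Euclidean norm of a finitely-indexed real vector. -/
def euclNorm {ι : Type*} [Fintype ι] (u : ι → ℝ) : ℝ := Real.sqrt (∑ i, (u i) ^ 2)

/-- For a `K × m` real matrix with `K ≥ m`, the `m`-th largest (i.e. least) singular value,
characterized as the infimum of `‖A x‖` over Euclidean unit vectors `x ∈ ℝ^m`. -/
def sigmaMin {K m : ℕ} (A : Matrix (Fin K) (Fin m) ℝ) : ℝ :=
  ⨅ x : {x : Fin m → ℝ // euclNorm x = 1}, euclNorm (A.mulVec x)

/-- The trained parameters `Θ = (V, α)` (the weights `v_i ∈ ℝ^{d+1}` and the coefficients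
`α ∈ ℝ^K`), as a Euclidean (inner-product) space; `c` and `ω` are held fixed. -/
abbrev VAParams (N d K : ℕ) : Type :=
  EuclideanSpace ℝ ((Fin N × Fin (d + 1)) ⊕ Fin K)

/-- The two-layer Kronecker network `u^K(x) = Σ_i c_i Σ_k α_k φ_k(ω_k v_iᵀ x̃)` as a function
of the trained parameters `θ = (V, α)`, with `c` and `ω` fixed. -/
def uKVA {N d K : ℕ} (φ : Fin K → ℝ → ℝ) (c : Fin N → ℝ) (ω : Fin K → ℝ)
    (θ : VAParams N d K) (x : Fin (d + 1) → ℝ) : ℝ :=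
  ∑ i, c i * ∑ k, θ (Sum.inr k) * φ k (ω k * ∑ j, θ (Sum.inl (i, j)) * x j)

/-- The square loss `L(θ) = ½ Σ_j (u^K(x_j; θ) − y_j)²`. -/
def sqLossVA {N d K m : ℕ} (φ : Fin K → ℝ → ℝ) (c : Fin N → ℝ) (ω : Fin K → ℝ)
    (xt : Fin m → Fin (d + 1) → ℝ) (y : Fin m → ℝ) (θ : VAParams N d K) : ℝ :=
  (1 / 2 : ℝ) * ∑ j, (uKVA φ c ω θ (xt j) - y j) ^ 2

namespace KNNaux

lemma euclNorm_nonneg {ι : Type*} [Fintype ι] (u : ι → ℝ) : 0 ≤ euclNorm u :=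
  Real.sqrt_nonneg _

lemma euclNorm_sq {ι : Type*} [Fintype ι] (u : ι → ℝ) :
    (euclNorm u) ^ 2 = ∑ i, (u i) ^ 2 := by
  rw [euclNorm, Real.sq_sqrt]
  positivity

lemma euclNorm_smul {ι : Type*} [Fintype ι] (a : ℝ) (u : ι → ℝ) :
    euclNorm (a • u) = |a| * euclNorm u := by
  rw [euclNorm, euclNorm]
  have : ∑ i, ((a • u) i) ^ 2 = a ^ 2 * ∑ i, (u i) ^ 2 := by
    rw [Finset.mul_sum]; congr 1; ext i; simp [Pi.smul_apply, smul_eq_mul]; ring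
  rw [this, Real.sqrt_mul (by positivity), Real.sqrt_sq_eq_abs]

lemma mulVec_euclNorm_ge {K m : ℕ} (A : Matrix (Fin K) (Fin m) ℝ) {μ : ℝ}
    (h : μ ≤ sigmaMin A) (r : Fin m → ℝ) :
    μ * euclNorm r ≤ euclNorm (A.mulVec r) := by
  rcases eq_or_lt_of_le (euclNorm_nonneg r) with h0 | h0
  · rw [← h0, mul_zero]; exact euclNorm_nonneg _
  · set ρ := euclNorm r with hρ
    set x : Fin m → ℝ := ρ⁻¹ • r with hx
    have hx1 : euclNorm x = 1 := by
      rw [hx, euclNorm_smul, abs_of_pos (inv_pos.mpr h0), inv_mul_cancel₀ h0.ne']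
    have hb : BddBelow (Set.range fun z : {x : Fin m → ℝ // euclNorm x = 1} =>
        euclNorm (A.mulVec z)) := ⟨0, by rintro w ⟨z, rfl⟩; exact euclNorm_nonneg _⟩
    have hle : sigmaMin A ≤ euclNorm (A.mulVec x) := ciInf_le hb ⟨x, hx1⟩
    have hAx : euclNorm (A.mulVec x) = ρ⁻¹ * euclNorm (A.mulVec r) := by
      rw [hx, A.mulVec_smul, euclNorm_smul, abs_of_pos (inv_pos.mpr h0)]
    have h2 := le_trans h hle
    rw [hAx] at h2
    calc μ * ρ ≤ (ρ⁻¹ * euclNorm (A.mulVec r)) * ρ :=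
          mul_le_mul_of_nonneg_right h2 h0.le
      _ = euclNorm (A.mulVec r) := by field_simp

variable {N d K m : ℕ}

lemma contDiff_proj (q : (Fin N × Fin (d + 1)) ⊕ Fin K) :
    ContDiff ℝ 1 (fun θ : VAParams N d K => θ q) :=
  (EuclideanSpace.proj (𝕜 := ℝ) q).contDiff

lemma contDiff_uKVA (φ : Fin K → ℝ → ℝ) (hφ : ∀ k, ContDiff ℝ 1 (φ k))
    (c : Fin N → ℝ) (ω : Fin K → ℝ) (x : Fin (d + 1) → ℝ) :
    ContDiff ℝ 1 (fun θ : VAParams N d K => uKVA φ c ω θ x) := by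
  unfold uKVA
  apply ContDiff.sum; intro i _
  apply ContDiff.mul contDiff_const
  apply ContDiff.sum; intro k _
  apply ContDiff.mul (contDiff_proj _)
  apply (hφ k).comp
  apply ContDiff.mul contDiff_const
  apply ContDiff.sum; intro j _
  exact (contDiff_proj _).mul contDiff_const

lemma contDiff_sqLossVA (φ : Fin K → ℝ → ℝ) (hφ : ∀ k, ContDiff ℝ 1 (φ k))
    (c : Fin N → ℝ) (ω : Fin K → ℝ) (xt : Fin m → Fin (d + 1) → ℝ) (y : Fin m → ℝ) :
    ContDiff ℝ 1 (sqLossVA φ c ω xt y) := by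
  unfold sqLossVA
  apply ContDiff.mul contDiff_const
  apply ContDiff.sum; intro j _
  exact ((contDiff_uKVA φ hφ c ω (xt j)).sub contDiff_const).pow 2

lemma uKVA_add_single (φ : Fin K → ℝ → ℝ) (c : Fin N → ℝ) (ω : Fin K → ℝ)
    (θ : VAParams N d K) (k : Fin K) (s : ℝ) (x : Fin (d + 1) → ℝ) :
    uKVA φ c ω (θ + s • EuclideanSpace.single (Sum.inr k) (1 : ℝ)) x
      = uKVA φ c ω θ x + s * ∑ i, c i * φ k (ω k * ∑ j, θ (Sum.inl (i, j)) * x j) := by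
  set e : VAParams N d K := EuclideanSpace.single (Sum.inr k) (1 : ℝ) with he
  have happ : ∀ q, (θ + s • e) q = θ q + (if q = Sum.inr k then s else 0) := by
    intro q
    simp [he, EuclideanSpace.single_apply, eq_comm, mul_ite]
  unfold uKVA
  simp only [happ]
  simp only [reduceCtorEq, if_false, add_zero, Sum.inr.injEq, add_mul, ite_mul,
    zero_mul, Finset.sum_add_distrib, mul_add, Finset.sum_ite_eq', Finset.mem_univ, if_true]
  congr 1
  rw [Finset.mul_sum]
  exact Finset.sum_congr rfl fun i _ => by ring

lemma fderiv_loss_single (φ : Fin K → ℝ → ℝ) (hφ : ∀ k, ContDiff ℝ 1 (φ k))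
    (c : Fin N → ℝ) (ω : Fin K → ℝ) (xt : Fin m → Fin (d + 1) → ℝ) (y : Fin m → ℝ)
    (θ : VAParams N d K) (k : Fin K) :
    fderiv ℝ (sqLossVA φ c ω xt y) θ (EuclideanSpace.single (Sum.inr k) (1 : ℝ))
      = ∑ j, (uKVA φ c ω θ (xt j) - y j)
          * ∑ i, c i * φ k (ω k * ∑ l, θ (Sum.inl (i, l)) * xt j l) := by
  set e : VAParams N d K := EuclideanSpace.single (Sum.inr k) (1 : ℝ) with he
  set a : Fin m → ℝ := fun j => ∑ i, c i * φ k (ω k * ∑ l, θ (Sum.inl (i, l)) * xt j l)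
    with ha
  set u : Fin m → ℝ := fun j => uKVA φ c ω θ (xt j) with hu
  have hL := ((contDiff_sqLossVA φ hφ c ω xt y).differentiable one_ne_zero θ).hasFDerivAt
  have hline : HasDerivAt (fun s : ℝ => θ + s • e) e 0 := by
    simpa using ((hasDerivAt_id (0 : ℝ)).smul_const e).const_add θ
  have hL' : HasFDerivAt (sqLossVA φ c ω xt y) (fderiv ℝ (sqLossVA φ c ω xt y) θ)
      ((fun s : ℝ => θ + s • e) 0) := by simpa using hL
  have hcomp : HasDerivAt (fun s : ℝ => sqLossVA φ c ω xt y (θ + s • e))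
      (fderiv ℝ (sqLossVA φ c ω xt y) θ e) 0 := by
    exact hL'.comp_hasDerivAt 0 hline
  have hfun : (fun s : ℝ => sqLossVA φ c ω xt y (θ + s • e))
      = fun s => (1 / 2 : ℝ) * ∑ j, (u j + s * a j - y j) ^ 2 := by
    funext s
    unfold sqLossVA
    congr 1
    exact Finset.sum_congr rfl fun j _ => by
      rw [he, uKVA_add_single φ c ω θ k s (xt j)]
  have hexp : HasDerivAt (fun s : ℝ => sqLossVA φ c ω xt y (θ + s • e))
      (∑ j, (u j - y j) * a j) 0 := by
    rw [hfun]
    have H : HasDerivAt (fun s : ℝ => (1 / 2 : ℝ) * ∑ j, (u j + s * a j - y j) ^ 2)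
        ((1 / 2 : ℝ) * ∑ j, ((2 : ℕ) * (u j + 0 * a j - y j) ^ (2 - 1) * (1 * a j))) 0 := by
      apply HasDerivAt.const_mul
      apply HasDerivAt.fun_sum
      intro j _
      exact ((((hasDerivAt_id (0 : ℝ)).mul_const (a j)).const_add (u j)).sub_const (y j)).pow 2
    convert H using 1
    rw [Finset.mul_sum]
    exact Finset.sum_congr rfl fun j _ => by push_cast; ring
  exact hcomp.unique hexp

lemma grad_bound (φ : Fin K → ℝ → ℝ) (hφ : ∀ k, ContDiff ℝ 1 (φ k))
    (c : Fin N → ℝ) (ω : Fin K → ℝ) (xt : Fin m → Fin (d + 1) → ℝ) (y : Fin m → ℝ)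
    {μ : ℝ} (hμ : 0 ≤ μ) (θ : VAParams N d K)
    (hA : μ ≤ sigmaMin (Matrix.of fun (k : Fin K) (j : Fin m) =>
        ∑ i, c i * φ k (ω k * ∑ l, θ (Sum.inl (i, l)) * xt j l))) :
    2 * μ ^ 2 * sqLossVA φ c ω xt y θ ≤ ‖gradient (sqLossVA φ c ω xt y) θ‖ ^ 2 := by
  set g := gradient (sqLossVA φ c ω xt y) θ with hgdef
  set A : Matrix (Fin K) (Fin m) ℝ := Matrix.of fun k j =>
      ∑ i, c i * φ k (ω k * ∑ l, θ (Sum.inl (i, l)) * xt j l) with hAdef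
  set r : Fin m → ℝ := fun j => uKVA φ c ω θ (xt j) - y j with hrdef
  have hgrad : HasGradientAt (sqLossVA φ c ω xt y) g θ :=
    ((contDiff_sqLossVA φ hφ c ω xt y).differentiable one_ne_zero θ).hasGradientAt
  have hfd := hgrad.hasFDerivAt.fderiv
  have hcoord : ∀ k : Fin K, g (Sum.inr k) = A.mulVec r k := by
    intro k
    have h1 := fderiv_loss_single φ hφ c ω xt y θ k
    rw [hfd] at h1
    have h2 : (InnerProductSpace.toDual ℝ (VAParams N d K) g)
        (EuclideanSpace.single (Sum.inr k) (1 : ℝ)) = g (Sum.inr k) := by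
      rw [InnerProductSpace.toDual_apply_apply, EuclideanSpace.inner_single_right]
      simp
    rw [h2] at h1
    rw [h1, Matrix.mulVec]
    simp only [dotProduct, hAdef, Matrix.of_apply, hrdef]
    exact Finset.sum_congr rfl fun j _ => by ring
  have hnorm : ‖g‖ ^ 2 = ∑ q, (g q) ^ 2 := by
    rw [EuclideanSpace.norm_eq, Real.sq_sqrt (by positivity)]
    exact Finset.sum_congr rfl fun q _ => by rw [Real.norm_eq_abs, sq_abs]
  have hsplit : (∑ q, (g q) ^ 2)
      = (∑ p : Fin N × Fin (d + 1), (g (Sum.inl p)) ^ 2) + ∑ k, (g (Sum.inr k)) ^ 2 :=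
    Fintype.sum_sum_type _
  have h3 : ∑ k, (g (Sum.inr k)) ^ 2 = (euclNorm (A.mulVec r)) ^ 2 := by
    rw [euclNorm_sq]
    exact Finset.sum_congr rfl fun k _ => by rw [hcoord k]
  have h4 : μ * euclNorm r ≤ euclNorm (A.mulVec r) := mulVec_euclNorm_ge A hA r
  have h5 : (μ * euclNorm r) ^ 2 ≤ (euclNorm (A.mulVec r)) ^ 2 :=
    pow_le_pow_left₀ (mul_nonneg hμ (euclNorm_nonneg r)) h4 2
  have h6 : (μ * euclNorm r) ^ 2 = 2 * μ ^ 2 * sqLossVA φ c ω xt y θ := by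
    rw [mul_pow, euclNorm_sq]
    unfold sqLossVA
    simp only [hrdef]
    ring
  have h7 : 0 ≤ ∑ p : Fin N × Fin (d + 1), (g (Sum.inl p)) ^ 2 := by positivity
  calc 2 * μ ^ 2 * sqLossVA φ c ω xt y θ = (μ * euclNorm r) ^ 2 := h6.symm
    _ ≤ (euclNorm (A.mulVec r)) ^ 2 := h5
    _ = ∑ k, (g (Sum.inr k)) ^ 2 := h3.symm
    _ ≤ ∑ q, (g q) ^ 2 := by rw [hsplit]; linarith
    _ = ‖g‖ ^ 2 := hnorm.symm

end KNNaux

/-- conditional exponential decay along the gradient flow.  If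
`Θ(t) = (V(t), α(t))` solves the gradient flow of the square loss on `[0, T]` (training only
`V` and `α`) and the matrix `A(t)_{kj} = Σ_i c_i φ_k(ω_k v_i(t)ᵀ x̃_j)` satisfies
`σ_min(A(t)) ≥ μ > 0` on `[0, T]`, then `L(t) ≤ L(0) e^{−2μ²t}` on `[0, T]`. -/
theorem conditional_exponential_decay {N d K m : ℕ} (hKm : m ≤ K)
    (φ : Fin K → ℝ → ℝ) (hφ : ∀ k, ContDiff ℝ 1 (φ k))
    (c : Fin N → ℝ) (ω : Fin K → ℝ)
    (xt : Fin m → Fin (d + 1) → ℝ) (y : Fin m → ℝ)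
    (T μ : ℝ) (hμ : 0 < μ)
    (Θ : ℝ → VAParams N d K)
    (hflow : ∀ t ∈ Set.Icc (0 : ℝ) T,
      HasDerivAt Θ (-(gradient (sqLossVA φ c ω xt y) (Θ t))) t)
    (hsv : ∀ t ∈ Set.Icc (0 : ℝ) T,
      μ ≤ sigmaMin (Matrix.of fun (k : Fin K) (j : Fin m) =>
        ∑ i, c i * φ k (ω k * ∑ l, Θ t (Sum.inl (i, l)) * xt j l))) :
    ∀ t ∈ Set.Icc (0 : ℝ) T,
      sqLossVA φ c ω xt y (Θ t) ≤
        sqLossVA φ c ω xt y (Θ 0) * Real.exp (-2 * μ ^ 2 * t) := by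
  classical
  intro t ht
  have hdiff : Differentiable ℝ (sqLossVA φ c ω xt y) :=
    (KNNaux.contDiff_sqLossVA φ hφ c ω xt y).differentiable one_ne_zero
  set F : ℝ → ℝ := fun s => sqLossVA φ c ω xt y (Θ s) with hF
  have hder : ∀ s ∈ Set.Icc (0 : ℝ) T,
      HasDerivAt F (-‖gradient (sqLossVA φ c ω xt y) (Θ s)‖ ^ 2) s := by
    intro s hs
    have hg : HasGradientAt (sqLossVA φ c ω xt y)
        (gradient (sqLossVA φ c ω xt y) (Θ s)) (Θ s) := (hdiff _).hasGradientAt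
    have hc := hg.hasFDerivAt.comp_hasDerivAt s (hflow s hs)
    have hval : (InnerProductSpace.toDual ℝ (VAParams N d K)
          (gradient (sqLossVA φ c ω xt y) (Θ s)))
          (-(gradient (sqLossVA φ c ω xt y) (Θ s)))
        = -‖gradient (sqLossVA φ c ω xt y) (Θ s)‖ ^ 2 := by
      rw [InnerProductSpace.toDual_apply_apply, inner_neg_right, real_inner_self_eq_norm_sq]
    rw [hval] at hc
    exact hc
  have hdb : ∀ s ∈ Set.Icc (0 : ℝ) T,
      -‖gradient (sqLossVA φ c ω xt y) (Θ s)‖ ^ 2 ≤ -(2 * μ ^ 2 * F s) := by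
    intro s hs
    have := KNNaux.grad_bound φ hφ c ω xt y hμ.le (Θ s) (hsv s hs)
    linarith
  set G : ℝ → ℝ := fun s => F s * Real.exp (2 * μ ^ 2 * s) with hG
  have hGder : ∀ s ∈ Set.Icc (0 : ℝ) T, HasDerivAt G
      ((-‖gradient (sqLossVA φ c ω xt y) (Θ s)‖ ^ 2 + 2 * μ ^ 2 * F s)
        * Real.exp (2 * μ ^ 2 * s)) s := by
    intro s hs
    have hexp : HasDerivAt (fun x : ℝ => Real.exp (2 * μ ^ 2 * x))
        (Real.exp (2 * μ ^ 2 * s) * (2 * μ ^ 2)) s := by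
      simpa using (((hasDerivAt_id s).const_mul (2 * μ ^ 2)).exp)
    have := (hder s hs).fun_mul hexp
    refine this.congr_deriv ?_
    ring
  have hGnonpos : ∀ s ∈ Set.Ioo (0 : ℝ) T, deriv G s ≤ 0 := by
    intro s hs
    have hs' : s ∈ Set.Icc (0 : ℝ) T := Set.mem_Icc_of_Ioo hs
    rw [(hGder s hs').deriv]
    apply mul_nonpos_of_nonpos_of_nonneg
    · have := hdb s hs'
      linarith
    · exact (Real.exp_pos _).le
  have hmono : AntitoneOn G (Set.Icc 0 T) := by
    apply antitoneOn_of_deriv_nonpos (convex_Icc 0 T)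
    · exact fun s hs => ((hGder s hs).continuousAt).continuousWithinAt
    · intro s hs
      rw [interior_Icc] at hs
      exact ((hGder s (Set.mem_Icc_of_Ioo hs)).differentiableAt).differentiableWithinAt
    · intro s hs
      rw [interior_Icc] at hs
      exact hGnonpos s hs
  have h0T : (0 : ℝ) ∈ Set.Icc (0 : ℝ) T := ⟨le_refl 0, ht.1.trans ht.2⟩
  have hGle : G t ≤ G 0 := hmono h0T ht ht.1
  have hG0 : G 0 = F 0 := by simp [hG]
  have key : F t * Real.exp (2 * μ ^ 2 * t) ≤ F 0 := by
    rw [← hG0]; exact hGle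
  have hpos : (0 : ℝ) < Real.exp (2 * μ ^ 2 * t) := Real.exp_pos _
  have := mul_le_mul_of_nonneg_right key (Real.exp_pos (-2 * μ ^ 2 * t)).le
  calc F t = F t * Real.exp (2 * μ ^ 2 * t) * Real.exp (-2 * μ ^ 2 * t) := by
        rw [mul_assoc, ← Real.exp_add]
        norm_num
    _ ≤ F 0 * Real.exp (-2 * μ ^ 2 * t) := this
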